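/- The family {S_α}_{α ∈ Γ} of Kronecker product matrices is a basis of the real symplectic Lie algebra sp(2·2^m): the matrices are linearly independent elements of sp(2·2^m) and their number equals dim sp(2·2^m) = 2·2^{2m} + 2^m. -/

import Mathlib

open Matrix

/-- The real 2×2 Pauli-type matrices indexed by `ZMod 2 × ZMod 2`:
`S_{(0,0)} = I`, `S_{(1,0)} = x`, `S_{(1,1)} = y`, `S_{(0,1)} = z`. -/
noncomputable def S2 : ZMod 2 × ZMod 2 → Matrix (Fin 2) (Fin 2) ℝ := fun a =>
  if a = (0, 0) then 1
  else if a = (1, 0) then !![0, 1; 1, 0]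
  else if a = (1, 1) then !![0, -1; 1, 0]
  else !![1, 0; 0, -1]

/-- The `(m+1)`-fold Kronecker product `S_α = S_{a₀} ⊗ ⋯ ⊗ S_{a_m}`, realized as a
matrix indexed by functions `Fin (m+1) → Fin 2`. -/
noncomputable def Sfun (m : ℕ) (α : Fin (m + 1) → ZMod 2 × ZMod 2) :
    Matrix (Fin (m + 1) → Fin 2) (Fin (m + 1) → Fin 2) ℝ :=
  Matrix.of fun v w => ∏ j, S2 (α j) (v j) (w j)

/-- The symplectic inner product on `ZMod 2 × ZMod 2`. -/
def sp2 (a b : ZMod 2 × ZMod 2) : ZMod 2 := a.1 * b.2 + a.2 * b.1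

/-- The symplectic form `J = -(y ⊗ I^{⊗m})`. -/
noncomputable def Jmat (m : ℕ) :
    Matrix (Fin (m + 1) → Fin 2) (Fin (m + 1) → Fin 2) ℝ :=
  -(Sfun m fun j => if j = 0 then ((1 : ZMod 2), (1 : ZMod 2)) else (0, 0))

/-- The number of components of `α` equal to `(1,1)`. -/
def deltaCount (m : ℕ) (α : Fin (m + 1) → ZMod 2 × ZMod 2) : ℕ :=
  (Finset.univ.filter fun j => α j = ((1 : ZMod 2), (1 : ZMod 2))).card

/-- The index set `Γ` of the basis of `sp(2·2^m)`. -/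
def GammaSet (m : ℕ) : Finset (Fin (m + 1) → ZMod 2 × ZMod 2) :=
  Finset.univ.filter fun α =>
    Odd (deltaCount m α + if α 0 = (0, 1) ∨ α 0 = (1, 0) then 1 else 0)

/-! ### Auxiliary lemmas -/

lemma zmod2cases : ∀ a : ZMod 2, a = 0 ∨ a = 1 := by decide

lemma S2_orth (p q : ZMod 2 × ZMod 2) :
    (∑ v : Fin 2, ∑ w : Fin 2, S2 p v w * S2 q v w) = if p = q then 2 else 0 := by
  rcases zmod2cases p.1 with h1 | h1 <;> rcases zmod2cases p.2 with h2 | h2 <;>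
  rcases zmod2cases q.1 with h3 | h3 <;> rcases zmod2cases q.2 with h4 | h4 <;>
  · rw [show p = (p.1, p.2) from rfl, show q = (q.1, q.2) from rfl, h1, h2, h3, h4]
    norm_num [S2, Fin.sum_univ_two, Prod.ext_iff, Matrix.one_apply]

lemma S2_transpose (a : ZMod 2 × ZMod 2) :
    (S2 a)ᵀ = (if a = (1,1) then (-1:ℝ) else 1) • S2 a := by
  rcases zmod2cases a.1 with h1 | h1 <;> rcases zmod2cases a.2 with h2 | h2 <;>
  · rw [show a = (a.1, a.2) from rfl, h1, h2]
    ext i j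
    fin_cases i <;> fin_cases j <;>
      norm_num [S2, Prod.ext_iff, Matrix.one_apply, Matrix.transpose, Matrix.vecHead,
        Matrix.vecTail]

lemma S2_T_mul_y (a : ZMod 2 × ZMod 2) :
    (S2 a)ᵀ * S2 (1,1) = (if a = (0,0) then (1:ℝ) else -1) • (S2 (1,1) * S2 a) := by
  rcases zmod2cases a.1 with h1 | h1 <;> rcases zmod2cases a.2 with h2 | h2 <;>
  · rw [show a = (a.1, a.2) from rfl, h1, h2]
    ext i j
    fin_cases i <;> fin_cases j <;>
      norm_num [S2, Prod.ext_iff, Matrix.one_apply, Matrix.mul_apply, Fin.sum_univ_two,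
        Matrix.transpose, Matrix.vecHead, Matrix.vecTail]

/-- Generic Kronecker-type product of 2×2 matrices. -/
noncomputable def KP (m : ℕ) (M : Fin (m + 1) → Matrix (Fin 2) (Fin 2) ℝ) :
    Matrix (Fin (m + 1) → Fin 2) (Fin (m + 1) → Fin 2) ℝ :=
  Matrix.of fun v w => ∏ j, M j (v j) (w j)

lemma sum_fn_prod {R : Type*} [CommSemiring R] {n : ℕ} {β : Type*} [Fintype β]
    (f : Fin n → β → R) :
    ∑ α : Fin n → β, ∏ j, f j (α j) = ∏ j, ∑ b, f j b := by
  rw [Finset.prod_univ_sum, Fintype.piFinset_univ]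

lemma Sfun_eq_KP (m : ℕ) (α : Fin (m + 1) → ZMod 2 × ZMod 2) :
    Sfun m α = KP m (fun j => S2 (α j)) := rfl

lemma KP_mul (m : ℕ) (M N : Fin (m + 1) → Matrix (Fin 2) (Fin 2) ℝ) :
    KP m M * KP m N = KP m (fun j => M j * N j) := by
  ext v w
  simp only [Matrix.mul_apply, KP, Matrix.of_apply]
  rw [← sum_fn_prod (fun j b => M j (v j) b * N j b (w j))]
  exact Finset.sum_congr rfl fun u _ => (Finset.prod_mul_distrib).symm

lemma KP_transpose (m : ℕ) (M : Fin (m + 1) → Matrix (Fin 2) (Fin 2) ℝ) :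
    (KP m M)ᵀ = KP m (fun j => (M j)ᵀ) := by
  ext v w; simp [KP]

lemma KP_smul (m : ℕ) (c : Fin (m + 1) → ℝ) (M : Fin (m + 1) → Matrix (Fin 2) (Fin 2) ℝ) :
    KP m (fun j => c j • M j) = (∏ j, c j) • KP m M := by
  ext v w
  simp [KP, Finset.prod_mul_distrib]

lemma KP_inner (m : ℕ) (M N : Fin (m + 1) → Matrix (Fin 2) (Fin 2) ℝ) :
    ∑ v : Fin (m+1) → Fin 2, ∑ w : Fin (m+1) → Fin 2, KP m M v w * KP m N v w
      = ∏ j, ∑ a : Fin 2, ∑ b : Fin 2, M j a b * N j a b := by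
  have h1 : ∀ v : Fin (m+1) → Fin 2,
      ∑ w : Fin (m+1) → Fin 2, KP m M v w * KP m N v w
        = ∏ j, ∑ b : Fin 2, M j (v j) b * N j (v j) b := by
    intro v
    rw [← sum_fn_prod (fun j b => M j (v j) b * N j (v j) b)]
    refine Finset.sum_congr rfl fun w _ => ?_
    simp only [KP, Matrix.of_apply]
    exact (Finset.prod_mul_distrib).symm
  calc ∑ v : Fin (m+1) → Fin 2, ∑ w : Fin (m+1) → Fin 2, KP m M v w * KP m N v w
      = ∑ v : Fin (m+1) → Fin 2, ∏ j, ∑ b : Fin 2, M j (v j) b * N j (v j) b :=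
        Finset.sum_congr rfl fun v _ => h1 v
    _ = ∏ j, ∑ a : Fin 2, ∑ b : Fin 2, M j a b * N j a b :=
        sum_fn_prod (fun j a => ∑ b : Fin 2, M j a b * N j a b)

lemma Sfun_orth (m : ℕ) (α β : Fin (m + 1) → ZMod 2 × ZMod 2) :
    (∑ v : Fin (m+1) → Fin 2, ∑ w : Fin (m+1) → Fin 2, Sfun m α v w * Sfun m β v w)
      = if α = β then (2:ℝ) ^ (m + 1) else 0 := by
  rw [Sfun_eq_KP, Sfun_eq_KP, KP_inner]
  have h : ∀ j, (∑ a : Fin 2, ∑ b : Fin 2, S2 (α j) a b * S2 (β j) a b)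
      = if α j = β j then (2:ℝ) else 0 := fun j => S2_orth (α j) (β j)
  by_cases hab : α = β
  · subst hab
    rw [if_pos rfl, Finset.prod_congr rfl fun j _ => (h j).trans (if_pos rfl), Finset.prod_const]
    simp
  · rw [if_neg hab]
    obtain ⟨j, hj⟩ := Function.ne_iff.mp hab
    exact Finset.prod_eq_zero (Finset.mem_univ j) (by rw [h j, if_neg hj])

/-- The exponent function used for signs. -/
def eFun (m : ℕ) (j : Fin (m + 1)) (a : ZMod 2 × ZMod 2) : ℕ :=
  (if a = (1,1) then 1 else 0) + (if j = 0 ∧ (a = (0,1) ∨ a = (1,0)) then 1 else 0)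

lemma sum_eFun (m : ℕ) (α : Fin (m + 1) → ZMod 2 × ZMod 2) :
    ∑ j, eFun m j (α j)
      = deltaCount m α + (if α 0 = (0,1) ∨ α 0 = (1,0) then 1 else 0) := by
  unfold eFun
  rw [Finset.sum_add_distrib]
  congr 1
  · rw [deltaCount, Finset.card_filter]
  · have : ∀ j : Fin (m+1), (if j = 0 ∧ (α j = (0,1) ∨ α j = (1,0)) then (1:ℕ) else 0)
        = if j = 0 then (if α 0 = (0,1) ∨ α 0 = (1,0) then 1 else 0) else 0 := by
      intro j
      by_cases hj : j = 0
      · subst hj; simp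
      · simp [hj]
    rw [Finset.sum_congr rfl fun j _ => this j, Finset.sum_ite_eq' Finset.univ 0]
    simp

lemma prod_neg_one_eFun {R : Type*} [CommRing R] (m : ℕ) (α : Fin (m + 1) → ZMod 2 × ZMod 2)
    (h : α ∈ GammaSet m) : (∏ j, (-1:R) ^ eFun m j (α j)) = -1 := by
  rw [Finset.prod_pow_eq_pow_sum, sum_eFun]
  have hodd : Odd (deltaCount m α + if α 0 = (0, 1) ∨ α 0 = (1, 0) then 1 else 0) :=
    (Finset.mem_filter.mp h).2
  exact Odd.neg_one_pow hodd

/-! ### Part 1: membership in sp -/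

lemma part1 (m : ℕ) (α : Fin (m + 1) → ZMod 2 × ZMod 2) (hα : α ∈ GammaSet m) :
    (Sfun m α)ᵀ * Jmat m + Jmat m * Sfun m α = 0 := by
  set β : Fin (m + 1) → ZMod 2 × ZMod 2 :=
    fun j => if j = 0 then ((1 : ZMod 2), (1 : ZMod 2)) else (0, 0) with hβ
  have hJ : Jmat m = -(Sfun m β) := rfl
  have key : (Sfun m α)ᵀ * Sfun m β = (-1 : ℝ) • (Sfun m β * Sfun m α) := by
    rw [Sfun_eq_KP m α, Sfun_eq_KP m β, KP_transpose, KP_mul, KP_mul]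
    have hpt : (fun j => (S2 (α j))ᵀ * S2 (β j))
        = fun j => ((-1:ℝ) ^ eFun m j (α j)) • (S2 (β j) * S2 (α j)) := by
      funext j
      by_cases hj : j = 0
      · subst hj
        have hb : β 0 = ((1 : ZMod 2), (1 : ZMod 2)) := by simp [hβ]
        rw [hb, S2_T_mul_y]
        congr 1
        rcases zmod2cases (α 0).1 with h1 | h1 <;> rcases zmod2cases (α 0).2 with h2 | h2 <;>
        · rw [show α 0 = ((α 0).1, (α 0).2) from rfl, h1, h2]
          norm_num [eFun, Prod.ext_iff]
      · have hb : β j = ((0 : ZMod 2), (0 : ZMod 2)) := by simp [hβ, hj]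
        have hS1 : S2 ((0 : ZMod 2), (0 : ZMod 2)) = 1 := by simp [S2]
        rw [hb, hS1, mul_one, one_mul, S2_transpose]
        congr 1
        by_cases h11 : α j = (1,1) <;> simp [eFun, hj, h11]
    rw [hpt, KP_smul]
    congr 1
    rw [prod_neg_one_eFun m α hα]
  rw [hJ]
  rw [mul_neg, neg_mul, key]
  simp

/-! ### Part 3: cardinality -/

lemma part3 (m : ℕ) : (GammaSet m).card = 2 * 2 ^ (2 * m) + 2 ^ m := by
  -- character sum
  have hchar : ∑ α : Fin (m+1) → ZMod 2 × ZMod 2,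
      (∏ j, (-1:ℤ) ^ eFun m j (α j)) = -(2 ^ (m + 1)) := by
    rw [sum_fn_prod (fun j a => (-1:ℤ) ^ eFun m j a)]
    have hj : ∀ j : Fin (m+1), (∑ a : ZMod 2 × ZMod 2, (-1:ℤ) ^ eFun m j a)
        = if j = 0 then -2 else 2 := by
      intro j
      by_cases hj0 : j = 0
      · subst hj0
        rw [if_pos rfl]
        simp only [eFun]
        decide
      · rw [if_neg hj0]
        simp only [eFun, hj0, false_and, if_false, add_zero]
        decide
    rw [Finset.prod_congr rfl fun j _ => hj j, Fin.prod_univ_succ]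
    have : ∀ i : Fin m, (if (Fin.succ i) = (0 : Fin (m+1)) then (-2:ℤ) else 2) = 2 := by
      intro i; rw [if_neg (Fin.succ_ne_zero i)]
    rw [if_pos rfl, Finset.prod_congr rfl fun i _ => this i, Finset.prod_const]
    simp [pow_succ]
    ring
  -- rewrite character sum via membership in Γ
  have hsplit : ∑ α : Fin (m+1) → ZMod 2 × ZMod 2, (∏ j, (-1:ℤ) ^ eFun m j (α j))
      = (Fintype.card (Fin (m+1) → ZMod 2 × ZMod 2) : ℤ) - 2 * (GammaSet m).card := by
    have hpt : ∀ α : Fin (m+1) → ZMod 2 × ZMod 2,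
        (∏ j, (-1:ℤ) ^ eFun m j (α j))
          = 1 - 2 * (if α ∈ GammaSet m then (1:ℤ) else 0) := by
      intro α
      rw [Finset.prod_pow_eq_pow_sum, sum_eFun]
      by_cases hmem : α ∈ GammaSet m
      · have hodd := (Finset.mem_filter.mp hmem).2
        rw [Odd.neg_one_pow hodd, if_pos hmem]; ring
      · have heven : ¬ Odd (deltaCount m α + if α 0 = (0, 1) ∨ α 0 = (1, 0) then 1 else 0) := by
          intro hc
          exact hmem (Finset.mem_filter.mpr ⟨Finset.mem_univ _, hc⟩)
        rw [Even.neg_one_pow (Nat.not_odd_iff_even.mp heven), if_neg hmem]; ring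
    have hb : ∑ α : Fin (m+1) → ZMod 2 × ZMod 2,
        (if α ∈ GammaSet m then (1:ℤ) else 0) = (GammaSet m).card := by
      rw [Finset.sum_ite_mem, Finset.univ_inter, Finset.sum_const, nsmul_eq_mul, mul_one]
    rw [Finset.sum_congr rfl fun α _ => hpt α, Finset.sum_sub_distrib]
    rw [← Finset.mul_sum, hb, Finset.sum_const, Fintype.card]
    simp [mul_comm]
  have hcard : (Fintype.card (Fin (m+1) → ZMod 2 × ZMod 2)) = 4 ^ (m + 1) := by
    rw [Fintype.card_fun]
    norm_num
  rw [hsplit, hcard] at hchar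
  have goal_int : ((GammaSet m).card : ℤ) = 2 * 2 ^ (2*m) + 2^m := by
    push_cast at hchar
    have h2m : (2:ℤ)^(2*m) = 2^m*2^m := by rw [two_mul, pow_add]
    have h4 : (4:ℤ)^(m+1) = 4 * (2^m*2^m) := by
      rw [show (4:ℤ) = 2^2 by norm_num, ← pow_mul,
        show 2*(m+1) = (m+m)+2 by ring, pow_add, pow_add]
      ring
    have hp : (2:ℤ)^(m+1) = 2*2^m := by rw [pow_succ]; ring
    rw [h4, hp] at hchar
    rw [h2m]
    linarith
  exact_mod_cast goal_int

/-! ### Part 2: linear independence -/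

noncomputable def phiMap (m : ℕ) (β : Fin (m + 1) → ZMod 2 × ZMod 2) :
    Matrix (Fin (m + 1) → Fin 2) (Fin (m + 1) → Fin 2) ℝ →ₗ[ℝ] ℝ where
  toFun M := ∑ v, ∑ w, Sfun m β v w * M v w
  map_add' M N := by
    simp [mul_add, Finset.sum_add_distrib]
  map_smul' c M := by
    simp only [Matrix.smul_apply, smul_eq_mul, RingHom.id_apply, Finset.mul_sum]
    refine Finset.sum_congr rfl fun v _ => Finset.sum_congr rfl fun w _ => ?_
    ring

lemma part2 (m : ℕ) :
    LinearIndependent ℝ (fun α : {α // α ∈ GammaSet m} => Sfun m α.val) := by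
  rw [linearIndependent_iff']
  intro s g h i hi
  have h0 := congrArg (phiMap m i.val) h
  rw [map_sum, map_zero] at h0
  simp only [_root_.map_smul] at h0
  have hphi : ∀ k : {α // α ∈ GammaSet m},
      phiMap m i.val (Sfun m k.val) = if i = k then (2:ℝ)^(m+1) else 0 := by
    intro k
    have : phiMap m i.val (Sfun m k.val)
        = if i.val = k.val then (2:ℝ)^(m+1) else 0 := Sfun_orth m i.val k.val
    rw [this]
    congr 1
    exact (propext Subtype.ext_iff).symm
  have h1 : ∑ k ∈ s, g k • (phiMap m i.val (Sfun m k.val)) = g i * 2^(m+1) := by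
    rw [Finset.sum_eq_single i]
    · rw [hphi i, if_pos rfl, smul_eq_mul]
    · intro k _ hki
      rw [hphi k, if_neg (fun hc => hki hc.symm), smul_eq_mul, mul_zero]
    · intro hns; exact absurd hi hns
  rw [h1] at h0
  have h2 : (2:ℝ)^(m+1) ≠ 0 := by positivity
  exact (mul_eq_zero.mp h0).resolve_right h2

/-- The family `{S_α}_{α ∈ Γ}` is a basis of `sp(2·2^m)`: each member lies in the
symplectic Lie algebra, the family is linearly independent, and its cardinality
equals `dim sp(2·2^m) = 2·2^{2m} + 2^m`. -/
theorem stmt7 (m : ℕ) :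
    (∀ α ∈ GammaSet m, (Sfun m α)ᵀ * Jmat m + Jmat m * Sfun m α = 0) ∧
    LinearIndependent ℝ (fun α : {α // α ∈ GammaSet m} => Sfun m α.val) ∧
    (GammaSet m).card = 2 * 2 ^ (2 * m) + 2 ^ m :=
  ⟨part1 m, part2 m, part3 m⟩
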